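/- Let n ≥ 3, 2 ≤ r ≤ n−1, and let M be a sparse-paving matroid of rank r on an n-element set S with set of r-circuits C_r. Then |C_r| ≤ (1/(n−r))·C(n, r+1). -/

import Mathlib

open Set

/-- A circuit of a matroid: a minimal dependent subset of the ground set. -/
def Matroid.IsCircuit' {α : Type*} (M : Matroid α) (C : Set α) : Prop :=
  C ⊆ M.E ∧ ¬ M.Indep C ∧ ∀ D : Set α, D ⊂ C → M.Indep D

/-- A matroid is paving if it has no circuit of cardinality less than its rank
(the common cardinality of its bases). -/
def Matroid.IsPaving {α : Type*} (M : Matroid α) : Prop :=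
  ∀ C : Set α, M.IsCircuit' C → ∀ B : Set α, M.IsBase B → B.ncard ≤ C.ncard

/-- The set of matroids of rank `r` on the `n`-element ground set `Fin n`. -/
def MatroidSet (n r : ℕ) : Set (Matroid (Fin n)) :=
  {M | M.E = Set.univ ∧ ∀ B : Set (Fin n), M.IsBase B → B.ncard = r}

/-- The set of sparse-paving matroids of rank `r` on `Fin n`. -/
def SparseSet (n r : ℕ) : Set (Matroid (Fin n)) :=
  {M | M ∈ MatroidSet n r ∧ M.IsPaving ∧ M✶.IsPaving}

/-- In a finite matroid, every dependent subset of the ground set contains a circuit. -/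
lemma exists_circuit_subset {α : Type*} [Finite α] (M : Matroid α) :
    ∀ k (D : Set α), D.ncard ≤ k → D ⊆ M.E → ¬ M.Indep D →
      ∃ C, C ⊆ D ∧ M.IsCircuit' C := by
  intro k
  induction k with
  | zero =>
    intro D h hE hdep
    have : D = ∅ := by
      have := Set.ncard_eq_zero (s := D) |>.1 (by omega)
      exact this
    exact absurd (this ▸ M.empty_indep) hdep
  | succ k ih =>
    intro D h hE hdep
    by_cases hmin : ∀ D' : Set α, D' ⊂ D → M.Indep D'
    · exact ⟨D, subset_rfl, hE, hdep, hmin⟩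
    · push_neg at hmin
      obtain ⟨D', hsub, hdep'⟩ := hmin
      have hlt : D'.ncard < D.ncard := Set.ncard_lt_ncard hsub (Set.toFinite D)
      obtain ⟨C, hCD, hC⟩ := ih D' (by omega) (hsub.subset.trans hE) hdep'
      exact ⟨C, hCD.trans hsub.subset, hC⟩

/-- Key lemma: a set of size `r+1` cannot contain two distinct `r`-circuits of a
sparse-paving matroid. -/
lemma key {n r : ℕ} {M : Matroid (Fin n)} (hE : M.E = univ)
    (hBr : ∀ B : Set (Fin n), M.IsBase B → B.ncard = r) (hpavd : M✶.IsPaving)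
    (hrn : r + 1 ≤ n) (hr2 : 2 ≤ r)
    {A C1 C2 : Set (Fin n)} (h1 : M.IsCircuit' C1) (h2 : M.IsCircuit' C2)
    (hc1 : C1.ncard = r) (hc2 : C2.ncard = r) (hne : C1 ≠ C2)
    (hA1 : C1 ⊆ A) (hA2 : C2 ⊆ A) (hAcard : A.ncard = r + 1) : False := by
  have hAE : A ⊆ M.E := by rw [hE]; exact subset_univ _
  -- pick f ∈ C1 \ C2
  have hns : ¬ C1 ⊆ C2 := by
    intro hsub
    exact hne (Set.eq_of_subset_of_ncard_le hsub (by omega) (Set.toFinite _))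
  obtain ⟨f, hf1, hf2⟩ := Set.not_subset.mp hns
  have hI0 : M.Indep (C1 \ {f}) := h1.2.2 _ (Set.sdiff_singleton_ssubset.mpr hf1)
  obtain ⟨J, hJ, hI0J⟩ := hI0.subset_isBasis_of_subset
    ((Set.diff_subset).trans hA1) hAE
  have hfJ : f ∉ J := by
    intro hfJ
    have hC1J : C1 ⊆ J := by
      have : C1 ⊆ insert f (C1 \ {f}) := by
        rw [Set.insert_diff_singleton]; exact Set.subset_insert _ _
      exact this.trans (Set.insert_subset hfJ hI0J)
    exact h1.2.1 (hJ.indep.subset hC1J)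
  obtain ⟨g, hg2, hgJ⟩ : ∃ g ∈ C2, g ∉ J := by
    by_contra hcon
    push_neg at hcon
    exact h2.2.1 (hJ.indep.subset hcon)
  have hgf : g ≠ f := fun h => hf2 (h ▸ hg2)
  have hJsub : J ⊆ A \ {f, g} := by
    intro x hx
    refine ⟨hJ.subset hx, ?_⟩
    rintro (rfl | rfl)
    · exact hfJ hx
    · exact hgJ hx
  have hfgA : ({f, g} : Set (Fin n)) ⊆ A :=
    Set.insert_subset (hA1 hf1) (Set.singleton_subset_iff.mpr (hA2 hg2))
  have hJcard : J.ncard ≤ r - 1 := by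
    have h1' : J.ncard ≤ (A \ {f, g}).ncard := Set.ncard_le_ncard hJsub (Set.toFinite _)
    have h2' : (A \ ({f, g} : Set (Fin n))).ncard = A.ncard - ({f, g} : Set (Fin n)).ncard :=
      Set.ncard_diff hfgA (Set.toFinite _)
    have h3' : ({f, g} : Set (Fin n)).ncard = 2 := Set.ncard_pair hgf.symm
    omega
  -- no base of M inside A
  have hnobase : ∀ B : Set (Fin n), M.IsBase B → ¬ B ⊆ A := by
    intro B hB hBA
    have hBc : B.ncard = r := hBr B hB
    have hlt : J.encard < B.encard := by
      rw [← (Set.toFinite J).cast_ncard_eq, ← (Set.toFinite B).cast_ncard_eq]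
      exact_mod_cast (by omega : J.ncard < B.ncard)
    obtain ⟨x, hx, hxJ⟩ := hJ.indep.augment hB.indep hlt
    have : J = insert x J :=
      hJ.eq_of_subset_indep hxJ (Set.subset_insert _ _)
        (Set.insert_subset (hBA hx.1) hJ.subset)
    exact hx.2 (this ▸ Set.mem_insert x J)
  -- the complement of A is dependent in the dual
  have hDdep : ¬ M✶.Indep (univ \ A) := by
    rw [Matroid.dual_indep_iff_exists']
    rintro ⟨-, B, hB, hdisj⟩
    refine hnobase B hB (fun x hx => ?_)
    by_contra hxA
    exact (hdisj.symm.ne_of_mem hx ⟨Set.mem_univ x, hxA⟩) rfl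
  have hDE : (univ \ A : Set (Fin n)) ⊆ M✶.E := by rw [Matroid.dual_ground, hE]; exact Set.diff_subset
  obtain ⟨Cd, hCdD, hCd⟩ := exists_circuit_subset M✶ (univ \ A : Set (Fin n)).ncard _ le_rfl hDE hDdep
  obtain ⟨B', hB'⟩ := M✶.exists_isBase
  have hpav := hpavd Cd hCd B' hB'
  have hB'E : B' ⊆ M.E := hB'.subset_ground
  have hB'base : M.IsBase (univ \ B') := by
    have := (Matroid.dual_isBase_iff (M := M) (B := B') hB'E).mp hB'
    rwa [hE] at this
  have hB'c : (univ \ B').ncard = r := hBr _ hB'base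
  have huniv : (univ : Set (Fin n)).ncard = n := by
    rw [Set.ncard_univ]; simp
  have hB'le : B'.ncard ≤ n := by
    have := Set.ncard_le_ncard (Set.subset_univ B') (Set.toFinite _)
    omega
  have hB'card : B'.ncard = n - r := by
    have := Set.ncard_diff (Set.subset_univ B') (Set.toFinite _)
    omega
  have hDcard : (univ \ A : Set (Fin n)).ncard = n - (r + 1) := by
    have := Set.ncard_diff (Set.subset_univ A) (Set.toFinite _)
    omega
  have hCdcard : Cd.ncard ≤ n - (r + 1) := by
    have := Set.ncard_le_ncard hCdD (Set.toFinite _)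
    omega
  omega

/-- A sparse-paving matroid of rank `r` on an `n`-set has at most
`C(n,r+1)/(n-r)` circuits of cardinality `r`. -/
theorem stmt10 (n r : ℕ) (hn : 3 ≤ n) (hr2 : 2 ≤ r) (hrn : r ≤ n - 1)
    (M : Matroid (Fin n)) (hM : M ∈ SparseSet n r) :
    (({C : Set (Fin n) | M.IsCircuit' C ∧ C.ncard = r}).ncard : ℚ)
      ≤ (n.choose (r + 1) : ℚ) / ((n - r : ℕ) : ℚ) := by
  classical
  obtain ⟨⟨hE, hBr⟩, hpav, hpavd⟩ := hM
  have hrn' : r + 1 ≤ n := by omega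
  set S := {C : Set (Fin n) | M.IsCircuit' C ∧ C.ncard = r} with hS
  let 𝒮 : Finset (Finset (Fin n)) :=
    Finset.univ.filter (fun C => M.IsCircuit' ↑C ∧ C.card = r)
  have hmem : ∀ C : Finset (Fin n), C ∈ 𝒮 ↔ M.IsCircuit' ↑C ∧ C.card = r := by
    intro C; simp [𝒮]
  have hScard : S.ncard = 𝒮.card := by
    have himg : S = (↑) '' (↑𝒮 : Set (Finset (Fin n))) := by
      ext C
      simp only [hS, Set.mem_setOf_eq, Set.mem_image, Finset.mem_coe, hmem]
      constructor
      · rintro ⟨h1, h2⟩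
        refine ⟨(Set.toFinite C).toFinset, ⟨?_, ?_⟩, (Set.toFinite C).coe_toFinset⟩
        · rwa [(Set.toFinite C).coe_toFinset]
        · rw [← Set.ncard_eq_toFinset_card C (Set.toFinite C)]; exact h2
      · rintro ⟨F, ⟨h1, h2⟩, rfl⟩
        exact ⟨h1, by rw [Set.ncard_coe_finset]; exact h2⟩
    rw [himg, Set.ncard_image_of_injective _ (fun a b h => Finset.coe_injective h),
      Set.ncard_coe_finset]
  -- double counting
  let t : Finset (Fin n) → Finset (Finset (Fin n)) :=
    fun C => (Finset.univ \ C).image (fun x => insert x C)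
  have htcard : ∀ C ∈ 𝒮, (t C).card = n - r := by
    intro C hC
    obtain ⟨h1, h2⟩ := (hmem C).mp hC
    rw [Finset.card_image_of_injOn, Finset.card_sdiff_of_subset (Finset.subset_univ C),
      Finset.card_univ, Fintype.card_fin, h2]
    intro x hx y hy hxy
    simp only [Finset.mem_coe, Finset.mem_sdiff, Finset.mem_univ, true_and] at hx hy
    have hxy' : insert x C = insert y C := hxy
    have : x ∈ insert y C := by rw [← hxy']; exact Finset.mem_insert_self x C
    rcases Finset.mem_insert.mp this with h | h
    · exact h
    · exact absurd h hx
  have hins_card : ∀ (C : Finset (Fin n)), C.card = r → ∀ x ∉ C,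
      (insert x C).card = r + 1 := by
    intro C hC x hx; rw [Finset.card_insert_of_notMem hx, hC]
  have hdisj : ∀ C1 ∈ 𝒮, ∀ C2 ∈ 𝒮, C1 ≠ C2 → Disjoint (t C1) (t C2) := by
    intro C1 hC1 C2 hC2 hne
    obtain ⟨hc1, hc1r⟩ := (hmem C1).mp hC1
    obtain ⟨hc2, hc2r⟩ := (hmem C2).mp hC2
    rw [Finset.disjoint_left]
    rintro A hA1 hA2
    simp only [t, Finset.mem_image, Finset.mem_sdiff, Finset.mem_univ, true_and] at hA1 hA2
    obtain ⟨x, hx, rfl⟩ := hA1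
    obtain ⟨y, hy, hxy⟩ := hA2
    refine key hE hBr hpavd hrn' hr2 hc1 hc2
      (by rw [Set.ncard_coe_finset]; exact hc1r)
      (by rw [Set.ncard_coe_finset]; exact hc2r)
      (fun h => hne (Finset.coe_injective h))
      (A := (↑(insert x C1) : Set (Fin n))) ?_ ?_ ?_
    · exact_mod_cast Finset.coe_subset.mpr (Finset.subset_insert x C1)
    · rw [← hxy]; exact_mod_cast Finset.coe_subset.mpr (Finset.subset_insert y C2)
    · rw [Set.ncard_coe_finset]; exact hins_card C1 hc1r x hx
  have hmain : 𝒮.card * (n - r) ≤ n.choose (r + 1) := by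
    have hsum : ∑ C ∈ 𝒮, (t C).card = 𝒮.card * (n - r) := by
      rw [Finset.sum_congr rfl htcard, Finset.sum_const, smul_eq_mul]
    calc 𝒮.card * (n - r) = (𝒮.biUnion t).card := by
          rw [Finset.card_biUnion hdisj, hsum]
      _ ≤ (Finset.powersetCard (r + 1) (Finset.univ : Finset (Fin n))).card := by
          apply Finset.card_le_card
          intro A hA
          simp only [Finset.mem_biUnion] at hA
          obtain ⟨C, hC, hAC⟩ := hA
          simp only [t, Finset.mem_image, Finset.mem_sdiff, Finset.mem_univ, true_and] at hAC
          obtain ⟨x, hx, rfl⟩ := hAC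
          rw [Finset.mem_powersetCard]
          exact ⟨Finset.subset_univ _, hins_card C ((hmem C).mp hC).2 x hx⟩
      _ = n.choose (r + 1) := by
          rw [Finset.card_powersetCard, Finset.card_univ, Fintype.card_fin]
  have hpos : (0 : ℚ) < ((n - r : ℕ) : ℚ) := by
    have : 0 < n - r := by omega
    exact_mod_cast this
  rw [le_div_iff₀ hpos]
  rw [hScard]
  exact_mod_cast hmain
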